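/- Let τ > 0, μ ∈ ℝ, i ∈ {1,2}, let v(s) = (2/√τ)·( (−2μ/√τ)·(1 − cos(√τ·s)) + (−1)^i·sin(√τ·s) ), and s_i its first positive zero. Then for all s ∈ (0, s_i), 4·v(s)² + v'(s)² > 0, and the function s ↦ 2·(−1)^i·v(s)/√(4·v(s)² + v'(s)²) takes values in (0, 1] and tends to 0 as s → 0⁺ and as s → s_i⁻. -/

import Mathlib

open Real

theorem stmt_18 (τ μ : ℝ) (hτ : 0 < τ) (i : ℕ) (hi : i = 1 ∨ i = 2) (v : ℝ → ℝ)
    (hv : ∀ s : ℝ, v s = (2 / Real.sqrt τ) *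
      ((-2 * μ / Real.sqrt τ) * (1 - Real.cos (Real.sqrt τ * s))
        + (-1 : ℝ) ^ i * Real.sin (Real.sqrt τ * s)))
    (si : ℝ) (hsi : si ∈ Set.Ioo 0 (2 * π / Real.sqrt τ)) (hz : v si = 0)
    (hfirst : ∀ s ∈ Set.Ioo 0 si, v s ≠ 0) :
    (∀ s ∈ Set.Ioo 0 si, 0 < 4 * v s ^ 2 + (deriv v s) ^ 2) ∧
    (∀ s ∈ Set.Ioo 0 si,
        2 * (-1 : ℝ) ^ i * v s / Real.sqrt (4 * v s ^ 2 + (deriv v s) ^ 2)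
          ∈ Set.Ioc (0:ℝ) 1) ∧
    Filter.Tendsto
      (fun s => 2 * (-1 : ℝ) ^ i * v s / Real.sqrt (4 * v s ^ 2 + (deriv v s) ^ 2))
      (nhdsWithin 0 (Set.Ioi 0)) (nhds 0) ∧
    Filter.Tendsto
      (fun s => 2 * (-1 : ℝ) ^ i * v s / Real.sqrt (4 * v s ^ 2 + (deriv v s) ^ 2))
      (nhdsWithin si (Set.Iio si)) (nhds 0) := by
  have hω : 0 < Real.sqrt τ := Real.sqrt_pos.mpr hτ
  set ω := Real.sqrt τ with hωdef
  set c : ℝ := (-1 : ℝ) ^ i with hcdef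
  have hc2 : c ^ 2 = 1 := by rcases hi with h | h <;> simp [hcdef, h]
  have hcne : c ≠ 0 := by
    intro h; rw [h] at hc2; norm_num at hc2
  set a : ℝ := -2 * μ / ω with hadef
  have hvfun : v = fun s => (2 / ω) * (a * (1 - Real.cos (ω * s)) + c * Real.sin (ω * s)) := by
    funext s; rw [hv s]
  set w : ℝ → ℝ := fun s => 2 * (a * Real.sin (ω * s) + c * Real.cos (ω * s)) with hwdef
  have hder : ∀ s, HasDerivAt v (w s) s := by
    intro s
    have hωs : HasDerivAt (fun s : ℝ => ω * s) ω s := by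
      simpa using (hasDerivAt_id s).const_mul ω
    have h := (((hωs.cos.const_sub 1).const_mul a).add (hωs.sin.const_mul c)).const_mul (2 / ω)
    rw [hvfun]
    refine h.congr_deriv ?_
    rw [hwdef]
    field_simp
  have hderiv : deriv v = w := funext fun s => (hder s).deriv
  have hvc : Continuous v := by
    rw [hvfun]; fun_prop
  have hwc : Continuous w := by
    rw [hwdef]; fun_prop
  have hv0 : v 0 = 0 := by rw [hv 0]; simp
  have hw0 : w 0 = 2 * c := by rw [hwdef]; simp
  -- w si ≠ 0
  have hθ1 : 0 < ω * si := mul_pos hω hsi.1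
  have hθ2 : ω * si < 2 * π := by
    have h := hsi.2
    rw [lt_div_iff₀ hω] at h
    linarith [h]
  have hwsi : w si ≠ 0 := by
    intro h0
    have e1 : a * (1 - Real.cos (ω * si)) + c * Real.sin (ω * si) = 0 := by
      have h := hz
      rw [hvfun] at h
      simp only at h
      have h2ω : (2 / ω : ℝ) ≠ 0 := by positivity
      exact (mul_eq_zero.mp h).resolve_left h2ω
    have e2 : a * Real.sin (ω * si) + c * Real.cos (ω * si) = 0 := by
      rw [hwdef] at h0
      simp only at h0
      linarith [h0]
    have hpyth := Real.sin_sq_add_cos_sq (ω * si)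
    have hkey : c * (1 - Real.cos (ω * si)) = 0 := by
      linear_combination Real.sin (ω * si) * e1 - (1 - Real.cos (ω * si)) * e2 - c * hpyth
    have hcos : Real.cos (ω * si) = 1 := by
      have h := (mul_eq_zero.mp hkey).resolve_left hcne
      linarith
    have := (Real.cos_eq_one_iff_of_lt_of_lt (by linarith [Real.pi_pos]) hθ2).mp hcos
    linarith
  -- sign of c * v near 0
  have hslope : Filter.Tendsto (fun s => c * v s / s) (nhdsWithin 0 (Set.Ioi 0)) (nhds 2) := by
    have h1 := hasDerivAt_iff_tendsto_slope.mp (hder 0)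
    have h2 : Filter.Tendsto (slope v 0) (nhdsWithin 0 (Set.Ioi 0)) (nhds (w 0)) :=
      h1.mono_left (nhdsWithin_mono 0 (fun x hx => ne_of_gt hx))
    have h3 := h2.const_mul c
    have heq : (fun s => c * slope v 0 s) = fun s => c * v s / s := by
      funext s
      rw [slope_def_field, hv0]
      ring
    rw [heq] at h3
    have : c * w 0 = 2 := by rw [hw0]; linear_combination 2 * hc2
    rwa [this] at h3
  have hev : ∀ᶠ s in nhdsWithin 0 (Set.Ioi 0), 0 < c * v s := by
    have h3 := hslope.eventually (eventually_gt_nhds (show (0:ℝ) < 2 by norm_num))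
    filter_upwards [h3, self_mem_nhdsWithin] with s hs1 hs2
    have hs2' : (0:ℝ) < s := hs2
    have h4 : 0 < c * v s / s * s := mul_pos hs1 hs2'
    rwa [div_mul_cancel₀ _ (ne_of_gt hs2')] at h4
  obtain ⟨δ, hδmem, hδsub⟩ := mem_nhdsGT_iff_exists_Ioo_subset.mp hev
  have hδ0 : (0:ℝ) < δ := hδmem
  have hcv : ∀ s ∈ Set.Ioo 0 si, 0 < c * v s := by
    intro s hs
    by_contra hle
    push_neg at hle
    have hlt : c * v s < 0 := lt_of_le_of_ne hle (mul_ne_zero hcne (hfirst s hs))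
    have hmin : 0 < min δ s := lt_min hδ0 hs.1
    set t := min δ s / 2 with htdef
    have ht0 : 0 < t := by positivity
    have htδ : t < δ := lt_of_lt_of_le (half_lt_self hmin) (min_le_left _ _)
    have hts : t < s := lt_of_lt_of_le (half_lt_self hmin) (min_le_right _ _)
    have hgt : 0 < c * v t := hδsub ⟨ht0, htδ⟩
    have hcont : ContinuousOn (fun x => c * v x) (Set.Icc t s) :=
      (continuous_const.mul hvc).continuousOn
    have hIVT := intermediate_value_Icc' (le_of_lt hts) hcont
    have h0mem : (0:ℝ) ∈ Set.Icc (c * v s) (c * v t) := ⟨le_of_lt hlt, le_of_lt hgt⟩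
    obtain ⟨x, hx, hx0⟩ := hIVT h0mem
    have hvx : v x = 0 := (mul_eq_zero.mp hx0).resolve_left hcne
    exact hfirst x ⟨lt_of_lt_of_le ht0 hx.1, lt_of_le_of_lt hx.2 hs.2⟩ hvx
  have hP : ∀ s ∈ Set.Ioo 0 si, 0 < 4 * v s ^ 2 + (w s) ^ 2 := by
    intro s hs
    have h1 : 0 < v s ^ 2 :=
      lt_of_le_of_ne (sq_nonneg _) (Ne.symm (pow_ne_zero 2 (hfirst s hs)))
    nlinarith [sq_nonneg (w s)]
  refine ⟨?_, ?_, ?_, ?_⟩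
  · intro s hs
    rw [hderiv]
    exact hP s hs
  · intro s hs
    rw [hderiv]
    have hPs := hP s hs
    have hsq : 0 < Real.sqrt (4 * v s ^ 2 + w s ^ 2) := Real.sqrt_pos.mpr hPs
    constructor
    · apply div_pos _ hsq
      have h := hcv s hs
      nlinarith
    · rw [div_le_one hsq]
      have hnn : 0 ≤ 2 * c * v s := by nlinarith [hcv s hs]
      have key : (2 * c * v s) ^ 2 = 4 * v s ^ 2 := by
        linear_combination (4 * v s ^ 2) * hc2
      calc 2 * c * v s = Real.sqrt ((2 * c * v s) ^ 2) := (Real.sqrt_sq hnn).symm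
        _ ≤ Real.sqrt (4 * v s ^ 2 + w s ^ 2) := by
            apply Real.sqrt_le_sqrt
            rw [key]
            nlinarith [sq_nonneg (w s)]
  · rw [hderiv]
    have hden : Real.sqrt (4 * v 0 ^ 2 + w 0 ^ 2) ≠ 0 := by
      rw [Real.sqrt_ne_zero']
      rw [hv0, hw0]
      nlinarith [hc2]
    have hc0 : ContinuousAt (fun s => 2 * c * v s / Real.sqrt (4 * v s ^ 2 + w s ^ 2)) 0 := by
      apply ContinuousAt.div
      · exact (continuous_const.mul hvc).continuousAt
      · exact (Real.continuous_sqrt.comp (by fun_prop)).continuousAt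
      · exact hden
    have hT : Filter.Tendsto (fun s => 2 * c * v s / Real.sqrt (4 * v s ^ 2 + w s ^ 2))
        (nhds 0) (nhds (2 * c * v 0 / Real.sqrt (4 * v 0 ^ 2 + w 0 ^ 2))) := hc0.tendsto
    have h0 : 2 * c * v 0 / Real.sqrt (4 * v 0 ^ 2 + w 0 ^ 2) = 0 := by
      rw [hv0]; simp
    rw [h0] at hT
    exact hT.mono_left nhdsWithin_le_nhds
  · rw [hderiv]
    have hden : Real.sqrt (4 * v si ^ 2 + w si ^ 2) ≠ 0 := by
      rw [Real.sqrt_ne_zero']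
      have h1 : 0 < w si ^ 2 :=
        lt_of_le_of_ne (sq_nonneg _) (Ne.symm (pow_ne_zero 2 hwsi))
      nlinarith [sq_nonneg (v si)]
    have hc0 : ContinuousAt (fun s => 2 * c * v s / Real.sqrt (4 * v s ^ 2 + w s ^ 2)) si := by
      apply ContinuousAt.div
      · exact (continuous_const.mul hvc).continuousAt
      · exact (Real.continuous_sqrt.comp (by fun_prop)).continuousAt
      · exact hden
    have hT : Filter.Tendsto (fun s => 2 * c * v s / Real.sqrt (4 * v s ^ 2 + w s ^ 2))
        (nhds si) (nhds (2 * c * v si / Real.sqrt (4 * v si ^ 2 + w si ^ 2))) := hc0.tendsto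
    have h0 : 2 * c * v si / Real.sqrt (4 * v si ^ 2 + w si ^ 2) = 0 := by
      rw [hz]; simp
    rw [h0] at hT
    exact hT.mono_left nhdsWithin_le_nhds
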